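/- arXiv:2508.13830 — 6 statements merged into one kernel-verified Lean document; each statement's English description precedes it below -/
import Mathlib

section
/- Let D be a digraph, Z ⊆ V(D), and S ⊆ V(D) \ Z. If S is Z-guarded (i.e., no directed walk in D − Z starts and ends in S while using a vertex of V(D) \ (Z ∪ S)), and P is a directed path in D all of whose vertices lie outside Z, then the vertex set of P meets S in at most |Z| + 1 maximal intervals; equivalently, the subdigraph of P induced by V(P) ∩ S has at most |Z| + 1 weakly connected components. -/
variable {V : Type*}

/-- A set `S` (disjoint from `Z`) is `Z`-guarded: no directed walk in `D − Z`
starts and ends in `S` while using a vertex of `V \ (Z ∪ S)`. -/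
def DiGuarded (A : V → V → Prop) (Z S : Set V) : Prop :=
  ¬ ∃ (l : List V) (h : l ≠ []),
      l.Chain' A ∧ (∀ v ∈ l, v ∉ Z) ∧
      l.head h ∈ S ∧ l.getLast h ∈ S ∧ ∃ v ∈ l, v ∉ Z ∧ v ∉ S

/-- `S` is `w`-guarded: `Z`-guarded for some `Z` of size at most `w` disjoint from `S`. -/
def DiWGuarded (A : V → V → Prop) (w : ℕ) (S : Set V) : Prop :=
  ∃ Z : Set V, Z.Finite ∧ Z.ncard ≤ w ∧ Disjoint S Z ∧ DiGuarded A Z S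

/-- There is a directed walk from `u` to `v`. -/
def DiReaches (A : V → V → Prop) (u v : V) : Prop :=
  ∃ (l : List V) (h : l ≠ []), l.Chain' A ∧ l.head h = u ∧ l.getLast h = v

/-- There is a directed walk from `x` to `y` in `D − v`. -/
def DiReachesAvoid (A : V → V → Prop) (v x y : V) : Prop :=
  ∃ (l : List V) (h : l ≠ []), l.Chain' A ∧ (∀ u ∈ l, u ≠ v) ∧
    l.head h = x ∧ l.getLast h = y

/-- Underlying undirected graph of the subdigraph induced by `X`. -/
def underUG (A : V → V → Prop) (X : Set V) : SimpleGraph X where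
  Adj x y := x ≠ y ∧ (A x.1 y.1 ∨ A y.1 x.1)
  symm := by constructor; intro x y h; exact ⟨h.1.symm, h.2.symm⟩
  loopless := by constructor; intro x h; exact h.1 rfl

/-- Number of weakly connected components of the subdigraph induced by `X`. -/
noncomputable def numWeakComp (A : V → V → Prop) (X : Set V) : ℕ :=
  Nat.card (underUG A X).ConnectedComponent

/-- `x` and `y` are consecutive (in this order) in the list `p`. -/
def ConsecIn (p : List V) (x y : V) : Prop :=
  ∃ l1 l2 : List V, p = l1 ++ x :: y :: l2

/-- There is no directed cycle all of whose vertices lie in `X`. -/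
def DiAcyclicOn (A : V → V → Prop) (X : Set V) : Prop :=
  ¬ ∃ (l : List V) (h : l ≠ []), (∀ v ∈ l, v ∈ X) ∧ l.Nodup ∧ l.Chain' A ∧
      A (l.getLast h) (l.head h)

theorem stmt0 [Fintype V] (A : V → V → Prop) (Z S : Set V)
    (hSZ : Disjoint S Z) (hguard : DiGuarded A Z S)
    (p : List V) (hchain : p.Chain' A) (hnodup : p.Nodup)
    (hZ : ∀ v ∈ p, v ∉ Z) :
    numWeakComp (ConsecIn p) {v | v ∈ p ∧ v ∈ S} ≤ Z.ncard + 1 := by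
  set X : Set V := {v | v ∈ p ∧ v ∈ S} with hX
  -- segments of p between S-vertices lie entirely in S
  have hseg : ∀ i j (hj : j < p.length) (hij : i ≤ j),
      p[i]'(lt_of_le_of_lt hij hj) ∈ S → p[j] ∈ S →
      ∀ k (hik : i ≤ k) (hkj : k ≤ j), p[k]'(lt_of_le_of_lt hkj hj) ∈ S := by
    intro i j hj hij hiS hjS k hik hkj
    by_contra hkS
    apply hguard
    have hlen : ((p.drop i).take (j - i + 1)).length = j - i + 1 := by
      simp [List.length_take, List.length_drop]; omega
    have hnil : (p.drop i).take (j - i + 1) ≠ [] := by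
      intro hnil; rw [hnil] at hlen; simp at hlen
    refine ⟨(p.drop i).take (j - i + 1), hnil, (hchain.drop i).take _, ?_, ?_, ?_, ?_⟩
    · intro v hv
      exact hZ v (List.mem_of_mem_drop (List.mem_of_mem_take hv))
    · rw [List.head_eq_getElem]
      simp only [List.getElem_take, List.getElem_drop]
      rw [getElem_congr_idx (show i + 0 = i by omega)]
      exact hiS
    · rw [List.getLast_eq_getElem]
      simp only [List.getElem_take, List.getElem_drop]
      rw [getElem_congr_idx (show i + (((p.drop i).take (j - i + 1)).length - 1) = j by
        rw [hlen]; omega)]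
      exact hjS
    · refine ⟨p[k]'(lt_of_le_of_lt hkj hj), ?_, hZ _ (List.getElem_mem _), hkS⟩
      have h1 : k - i < ((p.drop i).take (j - i + 1)).length := by omega
      have : ((p.drop i).take (j - i + 1))[k - i] = p[k]'(lt_of_le_of_lt hkj hj) := by
        simp only [List.getElem_take, List.getElem_drop]
        exact getElem_congr_idx (by omega)
      rw [← this]
      exact List.getElem_mem _
  have hmem : ∀ (k : ℕ) (hk : k < p.length), p[k] ∈ S → p[k] ∈ X :=
    fun k hk hs => ⟨List.getElem_mem _, hs⟩
  have hreach : ∀ d i (h : i + d < p.length)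
      (hall : ∀ k (h1 : i ≤ k) (h2 : k ≤ i + d), p[k]'(by omega) ∈ S)
      (x y : X) (hx : x.1 = p[i]'(by omega)) (hy : y.1 = p[i + d]),
      (underUG (ConsecIn p) X).Reachable x y := by
    intro d
    induction d with
    | zero =>
      intro i h hall x y hx hy
      have : x = y := Subtype.ext (by
        rw [hx, hy]; exact getElem_congr_idx (by omega))
      rw [this]
    | succ d ih =>
      intro i h hall x y hx hy
      have hmid : p[i + 1]'(by omega) ∈ X :=
        hmem (i + 1) (by omega) (hall (i + 1) (by omega) (by omega))
      have hadj : (underUG (ConsecIn p) X).Adj x ⟨p[i + 1]'(by omega), hmid⟩ := by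
        refine ⟨?_, Or.inl ?_⟩
        · intro hEq
          have h2 := Subtype.ext_iff.mp hEq
          rw [hx] at h2
          have := hnodup.getElem_inj_iff.mp h2
          omega
        · refine ⟨p.take i, p.drop (i + 2), ?_⟩
          simp only [hx]
          conv_lhs => rw [← List.take_append_drop i p]
          rw [List.drop_eq_getElem_cons (show i < p.length by omega),
            List.drop_eq_getElem_cons (show i + 1 < p.length by omega)]
      refine hadj.reachable.trans
        (ih (i + 1) (by omega) (fun k h1 h2 => hall k (by omega) (by omega))
          ⟨p[i + 1]'(by omega), hmid⟩ y rfl ?_)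
      rw [hy]
      exact getElem_congr_idx (by omega)
  have hsub : Subsingleton (underUG (ConsecIn p) X).ConnectedComponent := by
    constructor
    intro c1 c2
    refine SimpleGraph.ConnectedComponent.ind₂ (fun x y => ?_) c1 c2
    obtain ⟨hxp, hxS⟩ := x.2
    obtain ⟨hyp, hyS⟩ := y.2
    obtain ⟨i, hi, hix⟩ := List.getElem_of_mem hxp
    obtain ⟨j, hj, hjy⟩ := List.getElem_of_mem hyp
    apply SimpleGraph.ConnectedComponent.sound
    rcases le_total i j with hij | hij
    · refine hreach (j - i) i (by omega) ?_ x y hix.symm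
        (by rw [← hjy]; exact (getElem_congr_idx (by omega)).symm)
      intro k h1 h2
      exact hseg i j hj hij (by rw [hix]; exact hxS) (by rw [hjy]; exact hyS) k h1 (by omega)
    · refine (hreach (i - j) j (by omega) ?_ y x hjy.symm
        (by rw [← hix]; exact (getElem_congr_idx (by omega)).symm)).symm
      intro k h1 h2
      exact hseg j i hi hij (by rw [hjy]; exact hyS) (by rw [hix]; exact hxS) k h1 (by omega)
  have h1 : numWeakComp (ConsecIn p) X ≤ 1 := by
    unfold numWeakComp
    rcases isEmpty_or_nonempty ((underUG (ConsecIn p) X).ConnectedComponent) with he | hn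
    · simp [Nat.card_of_isEmpty]
    · exact le_of_eq Nat.card_unique
  omega
end

section
/- Let D be a digraph, Z ⊆ V(D) with |Z| = w, and let X ⊆ V(D) \ Z be Z-guarded. If H is a subdigraph of D that is the disjoint union of k directed paths, then the subdigraph of H induced by V(H) ∩ X has at most k + w weakly connected components. -/
variable {V : Type*}

section AuxLemmas

/-- The vertex at position `n` of `l` exists and is in `X`. -/
def Qp (X : Set V) (l : List V) (n : ℕ) : Prop := ∃ v, l[n]? = some v ∧ v ∈ X

/-- There is a `Z`-vertex at some position `g < s` of `l` such that all
positions strictly between `g` and `s` carry vertices outside `X`. -/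
def Ep (Z X : Set V) (l : List V) (s : ℕ) : Prop :=
  ∃ z, z ∈ Z ∧ ∃ g, g < s ∧ l[g]? = some z ∧
    ∀ m u, g < m → m < s → l[m]? = some u → u ∉ X

open Classical in
/-- The start of the maximal run of `X`-positions of `l` ending at `n`. -/
noncomputable def rsp (X : Set V) (l : List V) (n : ℕ) (_hQ : Qp X l n) : ℕ :=
  Nat.find (p := fun s => ∀ m, s ≤ m → m ≤ n → Qp X l m)
    ⟨n, fun m h1 h2 => by rwa [le_antisymm h2 h1]⟩

open Classical in
lemma rsp_spec (X : Set V) (l : List V) (n : ℕ) (hQ : Qp X l n) :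
    ∀ m, rsp X l n hQ ≤ m → m ≤ n → Qp X l m := by
  unfold rsp
  exact Nat.find_spec (p := fun s => ∀ m, s ≤ m → m ≤ n → Qp X l m)
    ⟨n, fun m h1 h2 => by rwa [le_antisymm h2 h1]⟩

open Classical in
lemma rsp_min' (X : Set V) (l : List V) (n : ℕ) (hQ : Qp X l n) {s : ℕ}
    (h : ∀ m, s ≤ m → m ≤ n → Qp X l m) : rsp X l n hQ ≤ s := by
  unfold rsp; exact Nat.find_min' _ h

lemma rsp_le (X : Set V) (l : List V) (n : ℕ) (hQ : Qp X l n) : rsp X l n hQ ≤ n :=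
  rsp_min' X l n hQ (fun m h1 h2 => by rwa [le_antisymm h2 h1])

lemma rsp_self (X : Set V) (l : List V) (n : ℕ) (hQ : Qp X l n) :
    Qp X l (rsp X l n hQ) :=
  rsp_spec X l n hQ _ le_rfl (rsp_le X l n hQ)

open Classical in
lemma rsp_pred (X : Set V) (l : List V) (n : ℕ) (hQ : Qp X l n)
    (h : 0 < rsp X l n hQ) : ¬ Qp X l (rsp X l n hQ - 1) := by
  intro hQ'
  have hmin : ¬ ∀ m, rsp X l n hQ - 1 ≤ m → m ≤ n → Qp X l m := by
    unfold rsp at *; exact Nat.find_min _ (Nat.sub_lt h one_pos)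
  apply hmin
  intro m h1 h2
  rcases eq_or_lt_of_le h1 with h1 | h1
  · rwa [← h1]
  · exact rsp_spec X l n hQ m (by omega) h2

lemma rsp_congr (X : Set V) {l l' : List V} (h : l = l') {n n' : ℕ} (hn : n = n')
    (hQ : Qp X l n) (hQ' : Qp X l' n') : rsp X l n hQ = rsp X l' n' hQ' := by
  subst h; subst hn; rfl

lemma rsp_succ (X : Set V) (l : List V) (n : ℕ) (hQ : Qp X l n)
    (hQ' : Qp X l (n + 1)) : rsp X l n hQ = rsp X l (n + 1) hQ' := by
  apply le_antisymm
  · exact rsp_min' X l n hQ (fun m h1 h2 =>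
      rsp_spec X l (n+1) hQ' m h1 (by omega))
  · refine rsp_min' X l (n+1) hQ' (fun m h1 h2 => ?_)
    rcases Nat.lt_succ_iff_lt_or_eq.mp (Nat.lt_succ_of_le h2) with h2' | h2'
    · exact rsp_spec X l n hQ m h1 (by omega)
    · rwa [h2']

lemma consecIn_of_getElem {l : List V} {n : ℕ} {x y : V}
    (hx : l[n]? = some x) (hy : l[n+1]? = some y) : ConsecIn l x y := by
  have hn1 : n + 1 < l.length := (List.getElem?_eq_some_iff.mp hy).1
  have hn : n < l.length := by omega
  refine ⟨l.take n, l.drop (n+2), ?_⟩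
  have h1 : l.drop n = l[n] :: l.drop (n+1) := List.drop_eq_getElem_cons hn
  have h2 : l.drop (n+1) = l[n+1] :: l.drop (n+2) := List.drop_eq_getElem_cons hn1
  have hx' : l[n] = x := by
    have := List.getElem?_eq_getElem hn; rw [hx] at this; exact (Option.some_inj.mp this).symm
  have hy' : l[n+1] = y := by
    have := List.getElem?_eq_getElem hn1; rw [hy] at this; exact (Option.some_inj.mp this).symm
  conv_lhs => rw [← List.take_append_drop n l, h1, h2, hx', hy']

lemma getElem_of_consecIn {l : List V} {x y : V} (h : ConsecIn l x y) :
    ∃ n, l[n]? = some x ∧ l[n+1]? = some y := by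
  obtain ⟨l1, l2, rfl⟩ := h
  refine ⟨l1.length, ?_, ?_⟩
  · rw [List.getElem?_append_right le_rfl]; simp
  · rw [List.getElem?_append_right (Nat.le_succ _)]; simp

lemma gapZ {A : V → V → Prop} {Z X : Set V} (hXZ : Disjoint X Z) (hguard : DiGuarded A Z X)
    {l : List V} (hch : l.Chain' A) {s : ℕ} (hs : Qp X l s)
    (hpred : ¬ Qp X l (s - 1)) (hex : ∃ m, m < s ∧ Qp X l m) :
    Ep Z X l s := by
  classical
  obtain ⟨m0, hm0s, hm0⟩ := hex
  obtain ⟨xs, hxs, hxsX⟩ := hs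
  have hslen : s < l.length := (List.getElem?_eq_some_iff.mp hxs).1
  set t := Nat.findGreatest (fun m => Qp X l m) (s - 1) with ht
  have hQt : Qp X l t := Nat.findGreatest_spec (m := m0) (by omega) hm0
  have hts : t ≤ s - 1 := Nat.findGreatest_le _
  have htgr : ∀ m, t < m → m ≤ s - 1 → ¬ Qp X l m := fun m h1 h2 =>
    Nat.findGreatest_is_greatest h1 h2
  have hts1 : t < s - 1 := by
    rcases lt_or_eq_of_le hts with h | h
    · exact h
    · exact absurd (h ▸ hQt) hpred
  have htslt : t < s := by omega
  obtain ⟨xt, hxt, hxtX⟩ := hQt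
  have key : ∃ g, t < g ∧ g < s ∧ ∃ z, l[g]? = some z ∧ z ∈ Z := by
    by_contra hcon
    push_neg at hcon
    set L := (l.drop t).take (s - t + 1) with hL
    have hLget : ∀ j, j ≤ s - t → L[j]? = l[t + j]? := by
      intro j hj
      rw [hL, List.getElem?_take, if_pos (by omega), List.getElem?_drop]
    have hLlen : L.length = s - t + 1 := by
      rw [hL, List.length_take, List.length_drop]; omega
    have hLne : L ≠ [] := by
      intro h; rw [h] at hLlen; simp at hLlen
    have hhead : L.head hLne = xt := by
      have h0 : L[0]? = some xt := by rw [hLget 0 (by omega)]; simpa using hxt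
      have := List.head?_eq_head hLne
      rw [List.head?_eq_getElem?, h0] at this
      exact (Option.some_inj.mp this).symm
    have hlast : L.getLast hLne = xs := by
      have h0 : L[L.length - 1]? = some xs := by
        rw [hLlen]
        simp only [Nat.add_sub_cancel]
        rw [hLget (s - t) le_rfl]
        have h1 : t + (s - t) = s := by omega
        rw [h1]; exact hxs
      rw [List.getLast_eq_getElem hLne]
      have := List.getElem?_eq_getElem (l := L) (i := L.length - 1)
        (by rw [hLlen]; omega)
      rw [h0] at this
      exact (Option.some_inj.mp this).symm
    have hmemL : ∀ v ∈ L, ∃ j, j ≤ s - t ∧ l[t + j]? = some v := by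
      intro v hv
      obtain ⟨j, hj⟩ := List.mem_iff_getElem?.mp hv
      have hjlen : j < L.length := (List.getElem?_eq_some_iff.mp hj).1
      exact ⟨j, by omega, by rw [← hLget j (by omega)]; exact hj⟩
    have hnotZ : ∀ v ∈ L, v ∉ Z := by
      intro v hv
      obtain ⟨j, hjle, hjget⟩ := hmemL v hv
      rcases Nat.eq_zero_or_pos j with rfl | hj0
      · have hveq : v = xt := by
          rw [Nat.add_zero] at hjget; rw [hjget] at hxt; exact (Option.some_inj.mp hxt)
        rw [hveq]; exact Set.disjoint_left.mp hXZ hxtX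
      rcases eq_or_lt_of_le hjle with hje | hjlt
      · have hveq : v = xs := by
          rw [hje] at hjget
          have h1 : t + (s - t) = s := by omega
          rw [h1] at hjget; rw [hjget] at hxs; exact (Option.some_inj.mp hxs)
        rw [hveq]; exact Set.disjoint_left.mp hXZ hxsX
      · exact hcon (t + j) (by omega) (by omega) v hjget
    have hslen1 : s - 1 < l.length := by omega
    obtain ⟨v1, hv1⟩ : ∃ v1, l[s-1]? = some v1 :=
      ⟨l[s-1], List.getElem?_eq_getElem hslen1⟩
    have hv1L : v1 ∈ L := by
      apply List.mem_iff_getElem?.mpr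
      refine ⟨s - 1 - t, ?_⟩
      rw [hLget (s - 1 - t) (by omega)]
      have h1 : t + (s - 1 - t) = s - 1 := by omega
      rw [h1]; exact hv1
    have hv1X : v1 ∉ X := fun h => hpred ⟨v1, hv1, h⟩
    exact hguard ⟨L, hLne, (hch.drop t).take _, hnotZ,
      hhead ▸ hxtX, hlast ▸ hxsX, v1, hv1L, hnotZ v1 hv1L, hv1X⟩
  obtain ⟨g, htg, hgs, z, hgz, hzZ⟩ := key
  refine ⟨z, hzZ, g, hgs, hgz, ?_⟩
  intro m u h1 h2 hmu huX
  exact htgr m (by omega) (by omega) ⟨u, hmu, huX⟩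

lemma reach_seg {X S : Set V} {G : SimpleGraph ↥S} {l : List V} (hl : l.Nodup)
    (hmem : ∀ v ∈ l, v ∈ X → v ∈ S)
    (hadj : ∀ (x y : V) (hx : x ∈ S) (hy : y ∈ S), ConsecIn l x y → x ≠ y →
      G.Adj ⟨x, hx⟩ ⟨y, hy⟩) :
    ∀ (d m : ℕ) (x y : V), l[m]? = some x → l[m + d]? = some y →
      (∀ j, j ≤ d → Qp X l (m + j)) → ∀ (hxS : x ∈ S) (hyS : y ∈ S),
      G.Reachable ⟨x, hxS⟩ ⟨y, hyS⟩ := by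
  intro d
  induction d with
  | zero =>
    intro m x y hx hy _ hxS hyS
    rw [Nat.add_zero, hx] at hy
    cases Option.some_inj.mp hy
    exact SimpleGraph.Reachable.refl _
  | succ d ih =>
    intro m x y hx hy hQ hxS hyS
    obtain ⟨y', hy', hy'X⟩ := hQ d (Nat.le_succ d)
    have hy'S : y' ∈ S := hmem y' (List.mem_iff_getElem?.mpr ⟨m + d, hy'⟩) hy'X
    have r1 := ih m x y' hx hy' (fun j hj => hQ j (by omega)) hxS hy'S
    have hy2 : l[(m + d) + 1]? = some y := by
      have h1 : (m + d) + 1 = m + (d + 1) := by omega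
      rw [h1]; exact hy
    have hcons : ConsecIn l y' y := consecIn_of_getElem hy' hy2
    have hne : y' ≠ y := by
      intro h
      subst h
      have hlt : m + d < l.length := (List.getElem?_eq_some_iff.mp hy').1
      have := (List.getElem?_inj hlt hl).mp (hy'.trans hy2.symm)
      omega
    exact r1.trans (hadj y' y hy'S hyS hcons hne).reachable

end AuxLemmas

theorem stmt1 [Fintype V] (A : V → V → Prop) (Z X : Set V) (w k : ℕ)
    (hZcard : Z.ncard = w) (hXZ : Disjoint X Z) (hguard : DiGuarded A Z X)
    (p : Fin k → List V)
    (hchain : ∀ i, (p i).Chain' A)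
    (hnodup : ∀ i, (p i).Nodup)
    (hdisj : ∀ i j, i ≠ j → ∀ v ∈ p i, v ∉ p j) :
    numWeakComp (fun x y => ∃ i, ConsecIn (p i) x y)
      ({v | ∃ i, v ∈ p i} ∩ X) ≤ k + w := by
  classical
  set S : Set V := {v | ∃ i, v ∈ p i} ∩ X with hSdef
  set G : SimpleGraph ↥S := underUG (fun x y => ∃ i, ConsecIn (p i) x y) S with hGdef
  have hmemS : ∀ (i : Fin k) (v : V), v ∈ p i → v ∈ X → v ∈ S :=
    fun i v hv hvX => ⟨⟨i, hv⟩, hvX⟩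
  have hidx_unique : ∀ (i j : Fin k) (v : V), v ∈ p i → v ∈ p j → i = j := by
    intro i j v hi hj
    by_contra h
    exact hdisj i j h v hi hj
  choose idx hidx using fun v : ↥S => (v.2.1 : ∃ i, v.1 ∈ p i)
  choose pos hpos using fun v : ↥S => List.mem_iff_getElem?.mp (hidx v)
  have hQv : ∀ v : ↥S, Qp X (p (idx v)) (pos v) := fun v => ⟨v.1, hpos v, v.2.2⟩
  set rv : ↥S → ℕ := fun v => rsp X (p (idx v)) (pos v) (hQv v) with hrv
  set f0 : Fin k → ℕ → Fin k ⊕ ↥Z := fun i s =>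
    if h : Ep Z X (p i) s then Sum.inr ⟨h.choose, h.choose_spec.1⟩ else Sum.inl i
    with hf0
  set f : ↥S → Fin k ⊕ ↥Z := fun v => f0 (idx v) (rv v) with hf
  have hrv_le : ∀ v : ↥S, rv v ≤ pos v := fun v => rsp_le _ _ _ _
  have hrvQ : ∀ v : ↥S, ∀ m, rv v ≤ m → m ≤ pos v → Qp X (p (idx v)) m :=
    fun v => rsp_spec _ _ _ _
  have hrvself : ∀ v : ↥S, Qp X (p (idx v)) (rv v) := fun v => rsp_self _ _ _ _
  have hnoE : ∀ v : ↥S, ¬ Ep Z X (p (idx v)) (rv v) →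
      ∀ m, m < rv v → ¬ Qp X (p (idx v)) m := by
    intro v hE m hm hQm
    apply hE
    refine gapZ hXZ hguard (hchain _) (hrvself v) ?_ ⟨m, hm, hQm⟩
    exact rsp_pred _ _ _ _ (show 0 < rv v by omega)
  -- adjacency invariance of f
  have hdir : ∀ (v u : ↥S) (i : Fin k), ConsecIn (p i) v.1 u.1 → f v = f u := by
    intro v u i hc
    obtain ⟨n, hn1, hn2⟩ := getElem_of_consecIn hc
    have hvi : v.1 ∈ p i := List.mem_iff_getElem?.mpr ⟨n, hn1⟩
    have hui : u.1 ∈ p i := List.mem_iff_getElem?.mpr ⟨n + 1, hn2⟩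
    have hiv : idx v = i := hidx_unique _ _ _ (hidx v) hvi
    have hiu : idx u = i := hidx_unique _ _ _ (hidx u) hui
    have hpv : (p i)[pos v]? = some v.1 := by rw [← hiv]; exact hpos v
    have hpu : (p i)[pos u]? = some u.1 := by rw [← hiu]; exact hpos u
    have hposv : pos v = n :=
      (List.getElem?_inj (List.getElem?_eq_some_iff.mp hpv).1 (hnodup i)).mp (hpv.trans hn1.symm)
    have hposu : pos u = n + 1 :=
      (List.getElem?_inj (List.getElem?_eq_some_iff.mp hpu).1 (hnodup i)).mp (hpu.trans hn2.symm)
    have hQn : Qp X (p i) n := ⟨v.1, hn1, v.2.2⟩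
    have hQn1 : Qp X (p i) (n + 1) := ⟨u.1, hn2, u.2.2⟩
    have hrvv : rv v = rsp X (p i) n hQn := rsp_congr X (congrArg p hiv) hposv _ _
    have hrvu : rv u = rsp X (p i) (n + 1) hQn1 := rsp_congr X (congrArg p hiu) hposu _ _
    have hre : rv v = rv u := by rw [hrvv, hrvu]; exact rsp_succ X (p i) n hQn hQn1
    show f0 (idx v) (rv v) = f0 (idx u) (rv u)
    rw [hiv, hiu, hre]
  have hcomp : ∀ (v u : ↥S), G.Adj v u → f v = f u := by
    intro v u hadj
    have h2 : (∃ i, ConsecIn (p i) v.1 u.1) ∨ (∃ i, ConsecIn (p i) u.1 v.1) := hadj.2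
    rcases h2 with ⟨i, hc⟩ | ⟨i, hc⟩
    · exact hdir v u i hc
    · exact (hdir u v i hc).symm
  -- f determines (idx, rv)
  have hsame : ∀ (v u : ↥S), f v = f u → idx v = idx u ∧ rv v = rv u := by
    intro v u hfvu
    have hfvu' : f0 (idx v) (rv v) = f0 (idx u) (rv u) := hfvu
    by_cases hE1 : Ep Z X (p (idx v)) (rv v)
    · by_cases hE2 : Ep Z X (p (idx u)) (rv u)
      · rw [hf0] at hfvu'
        simp only [dif_pos hE1, dif_pos hE2, Sum.inr.injEq, Subtype.mk.injEq] at hfvu'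
        obtain ⟨g1, hg1s, hg1get, hgap1⟩ := hE1.choose_spec.2
        obtain ⟨g2, hg2s, hg2get, hgap2⟩ := hE2.choose_spec.2
        rw [← hfvu'] at hg2get
        have hz1v : hE1.choose ∈ p (idx v) := List.mem_iff_getElem?.mpr ⟨g1, hg1get⟩
        have hz1u : hE1.choose ∈ p (idx u) := List.mem_iff_getElem?.mpr ⟨g2, hg2get⟩
        have hie : idx v = idx u := hidx_unique _ _ _ hz1v hz1u
        rw [← hie] at hg2get
        have hgeq : g1 = g2 :=
          (List.getElem?_inj (List.getElem?_eq_some_iff.mp hg1get).1 (hnodup _)).mp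
            (hg1get.trans hg2get.symm)
        refine ⟨hie, ?_⟩
        rcases lt_trichotomy (rv v) (rv u) with hlt | heq | hlt
        · exfalso
          obtain ⟨x1, hx1get, hx1X⟩ := hrvself v
          have hx1get' : (p (idx u))[rv v]? = some x1 := by rw [← hie]; exact hx1get
          exact hgap2 (rv v) x1 (by omega) hlt hx1get' hx1X
        · exact heq
        · exfalso
          obtain ⟨x1, hx1get, hx1X⟩ := hrvself u
          have hx1get' : (p (idx v))[rv u]? = some x1 := by rw [hie]; exact hx1get
          exact hgap1 (rv u) x1 (by omega) hlt hx1get' hx1X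
      · rw [hf0] at hfvu'
        simp only [dif_pos hE1, dif_neg hE2] at hfvu'
        exact nomatch hfvu'
    · by_cases hE2 : Ep Z X (p (idx u)) (rv u)
      · rw [hf0] at hfvu'
        simp only [dif_neg hE1, dif_pos hE2] at hfvu'
        exact nomatch hfvu'
      · rw [hf0] at hfvu'
        simp only [dif_neg hE1, dif_neg hE2, Sum.inl.injEq] at hfvu'
        refine ⟨hfvu', ?_⟩
        rcases lt_trichotomy (rv v) (rv u) with hlt | heq | hlt
        · exfalso
          obtain ⟨x1, hx1get, hx1X⟩ := hrvself v
          have : Qp X (p (idx u)) (rv v) := by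
            rw [← hfvu']; exact ⟨x1, hx1get, hx1X⟩
          exact hnoE u hE2 (rv v) hlt this
        · exact heq
        · exfalso
          obtain ⟨x1, hx1get, hx1X⟩ := hrvself u
          have : Qp X (p (idx v)) (rv u) := by
            rw [hfvu']; exact ⟨x1, hx1get, hx1X⟩
          exact hnoE v hE1 (rv u) hlt this
  -- same (idx, rv) implies reachable
  have hreach : ∀ (v u : ↥S), idx v = idx u → rv v = rv u → G.Reachable v u := by
    intro v u hie hre
    obtain ⟨xs, hxsget, hxsX⟩ := hrvself v
    have hxsS : xs ∈ S :=
      hmemS (idx v) xs (List.mem_iff_getElem?.mpr ⟨rv v, hxsget⟩) hxsX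
    have hadj' : ∀ (x y : V) (hx : x ∈ S) (hy : y ∈ S), ConsecIn (p (idx v)) x y →
        x ≠ y → G.Adj ⟨x, hx⟩ ⟨y, hy⟩ := by
      intro x y hx hy hc hne
      exact ⟨fun h => hne (congrArg Subtype.val h), Or.inl ⟨idx v, hc⟩⟩
    have r1 : G.Reachable ⟨xs, hxsS⟩ v := by
      have hyv : (p (idx v))[rv v + (pos v - rv v)]? = some v.1 := by
        have h1 : rv v + (pos v - rv v) = pos v := by
          have := hrv_le v; omega
        rw [h1]; exact hpos v
      refine reach_seg (hnodup (idx v)) (fun a ha haX => hmemS (idx v) a ha haX) hadj'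
        (pos v - rv v) (rv v) xs v.1 hxsget hyv (fun j hj => ?_) hxsS v.2
      exact hrvQ v (rv v + j) (by omega) (by have := hrv_le v; omega)
    have r2 : G.Reachable ⟨xs, hxsS⟩ u := by
      have hposu : (p (idx v))[pos u]? = some u.1 := by rw [hie]; exact hpos u
      have hruv : rv u = rv v := hre.symm
      have hrvleu : rv v ≤ pos u := by rw [← hruv]; exact hrv_le u
      have hyu : (p (idx v))[rv v + (pos u - rv v)]? = some u.1 := by
        have h1 : rv v + (pos u - rv v) = pos u := by omega
        rw [h1]; exact hposu
      refine reach_seg (hnodup (idx v)) (fun a ha haX => hmemS (idx v) a ha haX) hadj'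
        (pos u - rv v) (rv v) xs u.1 hxsget hyu (fun j hj => ?_) hxsS u.2
      have := hrvQ u (rv v + j) (by omega) (by omega)
      rwa [← hie] at this
    exact r1.symm.trans r2
  have hfinal : ∀ v u : ↥S, f v = f u → G.Reachable v u := fun v u h =>
    hreach v u (hsame v u h).1 (hsame v u h).2
  have hwalk0 : ∀ (v u : ↥S), G.Walk v u → f v = f u := by
    intro v u q
    induction q with
    | nil => rfl
    | cons a _ ih => exact (hcomp _ _ a).trans ih
  let F : G.ConnectedComponent → Fin k ⊕ ↥Z :=
    SimpleGraph.ConnectedComponent.lift f (fun v u q _ => hwalk0 v u q)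
  have hFinj : Function.Injective F := by
    intro c d
    refine SimpleGraph.ConnectedComponent.ind₂ (fun v u h => ?_) c d
    exact SimpleGraph.ConnectedComponent.eq.mpr (hfinal v u h)
  have hb : Nat.card G.ConnectedComponent ≤ Nat.card (Fin k ⊕ ↥Z) :=
    Nat.card_le_card_of_injective F hFinj
  have hcard : Nat.card (Fin k ⊕ ↥Z) = k + w := by
    rw [Nat.card_sum, Nat.card_eq_fintype_card, Fintype.card_fin,
      Nat.card_coe_set_eq, hZcard]
  exact hcard ▸ hb
end

section
/- Let D be a unilateral digraph, meaning that for every two distinct vertices u, v there is a directed walk from u to v or a directed walk from v to u. If X ⊆ V(D) is ∅-guarded (i.e., no directed walk in D starts and ends in X while using a vertex outside X) and X is nonempty, then the subdigraph of D induced by X is weakly connected. -/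
variable {V : Type*}

lemma reach_of_eq {X : Set V} {G : SimpleGraph X} {a b : X} (h : a = b) :
    G.Reachable a b := h ▸ SimpleGraph.Reachable.refl _

lemma walk_reach (A : V → V → Prop) (X : Set V) :
    ∀ (l : List V) (h : l ≠ []) (hX : ∀ v ∈ l, v ∈ X), l.Chain' A →
      (underUG A X).Reachable ⟨l.head h, hX _ (List.head_mem h)⟩
        ⟨l.getLast h, hX _ (List.getLast_mem h)⟩ := by
  intro l
  induction l with
  | nil => intro h; exact absurd rfl h
  | cons a t ih =>
    intro h hX hc
    cases t with
    | nil => exact SimpleGraph.Reachable.refl _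
    | cons b t' =>
      have ht : (b :: t') ≠ [] := by simp
      have hX' : ∀ v ∈ b :: t', v ∈ X := fun v hv => hX v (List.mem_cons_of_mem a hv)
      have hc' : (b :: t').Chain' A := hc.tail
      have hr := ih ht hX' hc'
      have hhead : (a :: b :: t').head h = a := rfl
      have hlast : (a :: b :: t').getLast h = (b :: t').getLast ht := by
        exact List.getLast_cons ht
      have hab : A a b := by
        have := hc.rel_head
        simpa using this
      by_cases hab' : a = b
      · subst hab'
        refine SimpleGraph.Reachable.trans (reach_of_eq rfl) (hr.trans (reach_of_eq ?_))
        simp [hlast]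
      · refine SimpleGraph.Reachable.trans ?_ (hr.trans (reach_of_eq ?_))
        · exact SimpleGraph.Adj.reachable ⟨by simpa [Subtype.ext_iff] using hab', Or.inl hab⟩
        · simp [hlast]

theorem stmt2 (A : V → V → Prop)
    (huni : ∀ u v : V, u ≠ v → DiReaches A u v ∨ DiReaches A v u)
    (X : Set V) (hne : X.Nonempty) (hguard : DiGuarded A ∅ X) :
    (underUG A X).Connected := by
  rw [SimpleGraph.connected_iff]
  refine ⟨?_, ⟨⟨hne.choose, hne.choose_spec⟩⟩⟩
  rintro ⟨x, hx⟩ ⟨y, hy⟩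
  by_cases hxy : x = y
  · exact reach_of_eq (by simp [hxy])
  · have key : ∀ (u v : V) (hu : u ∈ X) (hv : v ∈ X), DiReaches A u v →
        (underUG A X).Reachable ⟨u, hu⟩ ⟨v, hv⟩ := by
      rintro u v hu hv ⟨l, h, hc, hh, hl⟩
      have hX : ∀ w ∈ l, w ∈ X := by
        by_contra hcon
        push_neg at hcon
        obtain ⟨w, hw, hwX⟩ := hcon
        exact hguard ⟨l, h, hc, by simp, hh ▸ hu, hl ▸ hv, w, hw, by simp, hwX⟩
      have := walk_reach A X l h hX hc
      refine (reach_of_eq ?_).trans (this.trans (reach_of_eq ?_)) <;>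
        simp [hh, hl]
    rcases huni x y hxy with hr | hr
    · exact key x y hx hy hr
    · exact (key y x hy hx hr).symm
end

section
/- Let D be a digraph, v ∈ V(D), and c ≥ 1. Suppose V(D) \ {v} can be partitioned into c sets P_1, …, P_c such that for every i and every two distinct vertices x, y ∈ P_i there is a directed walk from x to y or from y to x in D − v. Then for every {v}-guarded set X ⊆ V(D) \ {v}, the subdigraph of D induced by X has at most c weakly connected components. -/
variable {V : Type*}

lemma reach_in_X_aux (A : V → V → Prop) (X : Set V) :
    ∀ (l : List V) (hne : l ≠ []), l.Chain' A → (∀ u ∈ l, u ∈ X) →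
    ∀ (hh : l.head hne ∈ X) (hl : l.getLast hne ∈ X),
      (underUG A X).Reachable ⟨l.head hne, hh⟩ ⟨l.getLast hne, hl⟩ := by
  intro l
  induction l with
  | nil => intro hne; exact absurd rfl hne
  | cons a t ih =>
    intro hne hch hall hh hl
    cases t with
    | nil =>
      simp only [List.head_cons, List.getLast_singleton]
      exact SimpleGraph.Reachable.refl _
    | cons b t' =>
      have hab : A a b := (List.isChain_cons_cons.mp hch).1
      have hcht : (b :: t').Chain' A := (List.isChain_cons_cons.mp hch).2
      have hallt : ∀ u ∈ b :: t', u ∈ X := fun u hu => hall u (List.mem_cons_of_mem a hu)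
      have hhb : (b :: t').head (by simp) ∈ X := hallt b (by simp)
      have hlast : (a :: b :: t').getLast hne = (b :: t').getLast (by simp) :=
        List.getLast_cons (by simp)
      have hlt : (b :: t').getLast (by simp) ∈ X := by rw [← hlast]; exact hl
      have hr := ih (by simp) hcht hallt hhb hlt
      have step : (underUG A X).Reachable ⟨a, hh⟩ ⟨b, hhb⟩ := by
        by_cases hab' : a = b
        · rw [show (⟨a, hh⟩ : X) = ⟨b, hhb⟩ from Subtype.ext hab']
        · exact SimpleGraph.Adj.reachable ⟨fun h => hab' (congrArg Subtype.val h), Or.inl hab⟩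
      have : (underUG A X).Reachable ⟨a, hh⟩ ⟨(b :: t').getLast (by simp), hlt⟩ :=
        step.trans hr
      simpa only [List.head_cons, hlast] using this

theorem stmt3 (A : V → V → Prop) (v : V) (c : ℕ) (hc : 1 ≤ c)
    (P : Fin c → Set V)
    (hdisjP : ∀ i j, i ≠ j → Disjoint (P i) (P j))
    (hcover : (⋃ i, P i) = {v}ᶜ)
    (hpart : ∀ i, ∀ x ∈ P i, ∀ y ∈ P i, x ≠ y →
      DiReachesAvoid A v x y ∨ DiReachesAvoid A v y x)
    (X : Set V) (hXv : v ∉ X) (hguard : DiGuarded A {v} X) :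
    numWeakComp A X ≤ c := by
  classical
  have key : ∀ x y : X, DiReachesAvoid A v x.1 y.1 → (underUG A X).Reachable x y := by
    rintro x y ⟨l, hne, hch, hav, hh, hl⟩
    have hall : ∀ u ∈ l, u ∈ X := by
      by_contra h
      push_neg at h
      obtain ⟨u, hu, hux⟩ := h
      exact hguard ⟨l, hne, hch, fun w hw => by simpa using hav w hw,
        by rw [hh]; exact x.2, by rw [hl]; exact y.2, u, hu, by simpa using hav u hu, hux⟩
    have hh' : l.head hne ∈ X := by rw [hh]; exact x.2
    have hl' : l.getLast hne ∈ X := by rw [hl]; exact y.2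
    have := reach_in_X_aux A X l hne hch hall hh' hl'
    have ex : (⟨l.head hne, hh'⟩ : X) = x := Subtype.ext hh
    have ey : (⟨l.getLast hne, hl'⟩ : X) = y := Subtype.ext hl
    rwa [ex, ey] at this
  have hrep : ∀ C : (underUG A X).ConnectedComponent,
      ∃ x, (underUG A X).connectedComponentMk x = C := fun C => C.exists_rep
  choose rep hrep using hrep
  have hmem : ∀ C, ∃ i, (rep C).1 ∈ P i := by
    intro C
    have hne : (rep C).1 ≠ v := fun h => hXv (h ▸ (rep C).2)
    have : (rep C).1 ∈ ⋃ i, P i := by rw [hcover]; simpa using hne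
    exact Set.mem_iUnion.mp this
  choose f hf using hmem
  have hinj : Function.Injective f := by
    intro C1 C2 heq
    by_contra hne
    have hxy : (rep C1).1 ≠ (rep C2).1 := by
      intro h
      exact hne (by rw [← hrep C1, ← hrep C2, Subtype.ext h])
    have hy : (rep C2).1 ∈ P (f C1) := heq ▸ hf C2
    have hreach : (underUG A X).Reachable (rep C1) (rep C2) := by
      rcases hpart (f C1) _ (hf C1) _ hy hxy with h | h
      · exact key _ _ h
      · exact (key _ _ h).symm
    exact hne (by rw [← hrep C1, ← hrep C2,
      SimpleGraph.ConnectedComponent.sound hreach])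
  calc numWeakComp A X ≤ Nat.card (Fin c) := Nat.card_le_card_of_injective f hinj
    _ = c := Nat.card_eq_fintype_card.trans (Fintype.card_fin c)
end

section
/- Let V be a finite set, N_1, …, N_k ⊆ V, and ℓ_1, …, ℓ_k non-negative integers. For each nonempty J ⊆ {1, …, k}, let X_J = {v ∈ V : {i : v ∈ N_i} = J}. Then there exist pairwise disjoint sets L_1, …, L_k with L_i ⊆ N_i and |L_i| = ℓ_i for all i, if and only if there exist non-negative integers t_i(J), defined for all nonempty J ⊆ {1, …, k} and i ∈ J, satisfying: (1) Σ_{J : i ∈ J} t_i(J) = ℓ_i for every i ∈ {1, …, k}, and (2) Σ_{i ∈ J} t_i(J) ≤ |X_J| for every nonempty J ⊆ {1, …, k}. -/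
variable {V : Type*}

lemma exists_disjoint_subsets {ι : Type*} [DecidableEq ι] {W : Type*} [DecidableEq W]
    (I : Finset ι) (S : Finset W) (a : ι → ℕ) (h : ∑ i ∈ I, a i ≤ S.card) :
    ∃ f : ι → Finset W, (∀ i ∈ I, f i ⊆ S) ∧ (∀ i ∈ I, (f i).card = a i) ∧
      ∀ i ∈ I, ∀ j ∈ I, i ≠ j → Disjoint (f i) (f j) := by
  induction I using Finset.induction_on generalizing S with
  | empty => exact ⟨fun _ => ∅, by simp, by simp, by simp⟩
  | @insert i I hiI ih =>
    rw [Finset.sum_insert hiI] at h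
    obtain ⟨B, hBS, hBcard⟩ := Finset.exists_subset_card_eq (le_trans (Nat.le_add_right _ _) h)
    have hcard' : ∑ j ∈ I, a j ≤ (S \ B).card := by
      rw [Finset.card_sdiff_of_subset hBS, hBcard]; omega
    obtain ⟨f, hsub, hc, hd⟩ := ih (S \ B) hcard'
    have hne : ∀ j ∈ I, j ≠ i := fun j hj e => hiI (e ▸ hj)
    refine ⟨fun j => if j = i then B else f j, ?_, ?_, ?_⟩
    · intro j hj
      rcases Finset.mem_insert.mp hj with rfl | hj
      · simp [hBS]
      · simp only [if_neg (hne j hj)]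
        exact (hsub j hj).trans (Finset.sdiff_subset)
    · intro j hj
      rcases Finset.mem_insert.mp hj with rfl | hj
      · simp [hBcard]
      · simp only [if_neg (hne j hj)]; exact hc j hj
    · intro x hx y hy hxy
      have key : ∀ j ∈ I, Disjoint B (f j) := by
        intro j hj
        exact Finset.disjoint_left.mpr fun v hv hv' =>
          (Finset.mem_sdiff.mp (hsub j hj hv')).2 hv
      rcases Finset.mem_insert.mp hx with rfl | hx'
      · rcases Finset.mem_insert.mp hy with rfl | hy'
        · exact absurd rfl hxy
        · simp only [if_pos, if_neg (hne y hy')]; exact key y hy'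
      · rcases Finset.mem_insert.mp hy with rfl | hy'
        · simp only [if_pos, if_neg (hne x hx')]; exact (key x hx').symm
        · simp only [if_neg (hne x hx'), if_neg (hne y hy')]; exact hd x hx' y hy' hxy

theorem stmt5 {W : Type*} [DecidableEq W] [Fintype W] (k : ℕ)
    (N : Fin k → Finset W) (ℓ : Fin k → ℕ) :
    (∃ L : Fin k → Finset W, (∀ i, L i ⊆ N i) ∧ (∀ i, (L i).card = ℓ i) ∧
      ∀ i j, i ≠ j → Disjoint (L i) (L j)) ↔
    (∃ t : Finset (Fin k) → Fin k → ℕ,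
      (∀ i : Fin k,
        ∑ J ∈ Finset.univ.filter (fun J : Finset (Fin k) => i ∈ J), t J i = ℓ i) ∧
      (∀ J : Finset (Fin k), J.Nonempty →
        ∑ i ∈ J, t J i ≤
          (Finset.univ.filter (fun v : W =>
            Finset.univ.filter (fun i : Fin k => v ∈ N i) = J)).card)) := by
  classical
  set X : Finset (Fin k) → Finset W := fun J =>
    Finset.univ.filter (fun v : W => Finset.univ.filter (fun i : Fin k => v ∈ N i) = J)
    with hX
  have memX : ∀ (v : W) (J : Finset (Fin k)),
      v ∈ X J ↔ Finset.univ.filter (fun i : Fin k => v ∈ N i) = J := by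
    intro v J; simp [hX]
  have Xdis : ∀ J J', J ≠ J' → Disjoint (X J) (X J') := by
    intro J J' hne
    refine Finset.disjoint_left.mpr fun v hv hv' => hne ?_
    rw [← (memX v J).mp hv, (memX v J').mp hv']
  constructor
  · rintro ⟨L, hLN, hLcard, hLdis⟩
    refine ⟨fun J i => (L i ∩ X J).card, ?_, ?_⟩
    · intro i
      have hbi : (Finset.univ.filter (fun J : Finset (Fin k) => i ∈ J)).biUnion
          (fun J => L i ∩ X J) = L i := by
        apply Finset.Subset.antisymm
        · intro v hv
          simp only [Finset.mem_biUnion] at hv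
          obtain ⟨J, _, hv⟩ := hv
          exact (Finset.mem_inter.mp hv).1
        · intro v hv
          refine Finset.mem_biUnion.mpr ⟨Finset.univ.filter (fun i => v ∈ N i), ?_, ?_⟩
          · simp [hLN i hv]
          · simp [Finset.mem_inter, hv, memX]
      calc ∑ J ∈ Finset.univ.filter (fun J : Finset (Fin k) => i ∈ J), (L i ∩ X J).card
          = ((Finset.univ.filter (fun J : Finset (Fin k) => i ∈ J)).biUnion
              (fun J => L i ∩ X J)).card := by
            rw [Finset.card_biUnion]
            intro J hJ J' hJ' hne
            exact Finset.disjoint_of_subset_left Finset.inter_subset_right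
              (Finset.disjoint_of_subset_right Finset.inter_subset_right (Xdis J J' hne))
        _ = ℓ i := by rw [hbi, hLcard]
    · intro J _
      calc ∑ i ∈ J, (L i ∩ X J).card
          = (J.biUnion (fun i => L i ∩ X J)).card := by
            rw [Finset.card_biUnion]
            intro i hi j hj hne
            exact Finset.disjoint_of_subset_left Finset.inter_subset_left
              (Finset.disjoint_of_subset_right Finset.inter_subset_left (hLdis i j hne))
        _ ≤ (X J).card := by
            apply Finset.card_le_card
            intro v hv
            obtain ⟨i, _, hv⟩ := Finset.mem_biUnion.mp hv
            exact (Finset.mem_inter.mp hv).2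
  · rintro ⟨t, ht1, ht2⟩
    have hle : ∀ J : Finset (Fin k), ∑ i ∈ J, t J i ≤ (X J).card := by
      intro J
      rcases J.eq_empty_or_nonempty with rfl | hne
      · simp
      · exact ht2 J hne
    have := fun J : Finset (Fin k) => exists_disjoint_subsets J (X J) (t J) (hle J)
    choose g hgsub hgcard hgdis using this
    refine ⟨fun i => (Finset.univ.filter (fun J : Finset (Fin k) => i ∈ J)).biUnion
      (fun J => g J i), ?_, ?_, ?_⟩
    · intro i v hv
      obtain ⟨J, hJ, hv⟩ := Finset.mem_biUnion.mp hv
      simp only [Finset.mem_filter] at hJ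
      have hvX := hgsub J i hJ.2 hv
      have := (memX v J).mp hvX
      have : i ∈ Finset.univ.filter (fun i : Fin k => v ∈ N i) := this ▸ hJ.2
      simpa using this
    · intro i
      rw [Finset.card_biUnion, ← ht1 i]
      · apply Finset.sum_congr rfl
        intro J hJ
        simp only [Finset.mem_filter] at hJ
        exact hgcard J i hJ.2
      · intro J hJ J' hJ' hne
        rw [Finset.mem_coe, Finset.mem_filter] at hJ hJ'
        exact Finset.disjoint_of_subset_left (hgsub J i hJ.2)
          (Finset.disjoint_of_subset_right (hgsub J' i hJ'.2) (Xdis J J' hne))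
    · intro i j hij
      refine Finset.disjoint_left.mpr fun v hv hv' => ?_
      obtain ⟨J, hJ, hv⟩ := Finset.mem_biUnion.mp hv
      obtain ⟨J', hJ', hv'⟩ := Finset.mem_biUnion.mp hv'
      simp only [Finset.mem_filter] at hJ hJ'
      by_cases hJJ : J = J'
      · subst hJJ
        exact Finset.disjoint_left.mp (hgdis J i hJ.2 j hJ'.2 hij) hv hv'
      · exact Finset.disjoint_left.mp (Xdis J J' hJJ) (hgsub J i hJ.2 hv)
          (hgsub J' j hJ'.2 hv')
end

section
/- Let D be an antidirected path with vertices u_1, …, u_{2n+1} (in path order), whose arcs alternate direction so that each u_{2i} (for 1 ≤ i ≤ n) is a source with out-neighbors u_{2i−1} and u_{2i+1}, and each u_{2i+1} is a sink. Let S = {u_1, u_3, …, u_{2n+1}} be the set of sinks. Then S is ∅-guarded in D, and the subdigraph of D induced by S has exactly n + 1 weakly connected components (it has no arcs). Consequently, for every function f there exists an antidirected path H and a 0-guarded set X in H such that H[X] has more than f(0) weakly connected components; i.e., the class of antidirected paths does not have bounded breakability. -/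
variable {V : Type*}

/-- Arc relation of the antidirected path on `2n+1` vertices: the vertices at odd
(0-based) positions are the sources, with arcs towards both neighbours. -/
def antiA (n : ℕ) (i j : Fin (2 * n + 1)) : Prop :=
  Odd (i : ℕ) ∧ ((j : ℕ) = (i : ℕ) + 1 ∨ (i : ℕ) = (j : ℕ) + 1)

/-- The set of sinks of the antidirected path on `2n+1` vertices. -/
def antiS (n : ℕ) : Set (Fin (2 * n + 1)) := {i | Even (i : ℕ)}


lemma noEdges_card (A : V → V → Prop) (X : Set V)
    (h : ∀ x y : X, ¬ (underUG A X).Adj x y) :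
    numWeakComp A X = Nat.card X := by
  have key : ∀ x y : X, (underUG A X).Reachable x y → x = y := by
    rintro x y ⟨w⟩
    cases w with
    | nil => rfl
    | cons h' _ => exact absurd h' (h _ _)
  have hb : Function.Bijective ((underUG A X).connectedComponentMk) := by
    constructor
    · intro x y hxy
      exact key x y (SimpleGraph.ConnectedComponent.exact hxy)
    · intro c
      exact Quot.exists_rep c
  exact (Nat.card_congr (Equiv.ofBijective _ hb)).symm

def evenEquiv (n : ℕ) : Fin (n + 1) ≃ {i : Fin (2 * n + 1) // Even (i : ℕ)} where
  toFun k := ⟨⟨2 * k.1, by omega⟩, ⟨k.1, by show 2 * k.1 = k.1 + k.1; ring⟩⟩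
  invFun s := ⟨s.1.1 / 2, by
    obtain ⟨⟨i, hi⟩, ⟨m, hm⟩⟩ := s
    simp only at *
    omega⟩
  left_inv k := by
    ext
    show 2 * k.1 / 2 = k.1
    omega
  right_inv s := by
    obtain ⟨⟨i, hi⟩, ⟨m, hm⟩⟩ := s
    have hm' : i = m + m := hm
    ext
    show 2 * (i / 2) = i
    omega

lemma no_arc_antiS (n : ℕ) : ∀ i ∈ antiS n, ∀ j ∈ antiS n, ¬ antiA n i j := by
  intro i hi j hj hij
  exact (Nat.not_odd_iff_even.mpr hi) hij.1

lemma guarded_antiS (n : ℕ) : DiGuarded (antiA n) ∅ (antiS n) := by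
  rintro ⟨l, hne, hchain, -, hhead, -, v, hv, -, hvS⟩
  match l, hne with
  | [a], _ =>
    simp only [List.mem_singleton] at hv
    subst hv
    exact hvS hhead
  | a :: b :: rest, _ =>
    have hab : antiA n a b := (List.isChain_cons_cons.mp hchain).1
    have : Even (a : ℕ) := hhead
    exact (Nat.not_odd_iff_even.mpr this) hab.1

lemma numWeak_antiS (n : ℕ) : numWeakComp (antiA n) (antiS n) = n + 1 := by
  rw [noEdges_card]
  · have : Nat.card {i : Fin (2 * n + 1) // Even (i : ℕ)} = n + 1 := by
      rw [← Nat.card_congr (evenEquiv n)]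
      simp
    exact this
  · rintro x y ⟨-, h | h⟩
    · exact no_arc_antiS n x.1 x.2 y.1 y.2 h
    · exact no_arc_antiS n y.1 y.2 x.1 x.2 h


theorem stmt8 :
    (∀ n : ℕ,
      DiGuarded (antiA n) ∅ (antiS n) ∧
      (∀ i ∈ antiS n, ∀ j ∈ antiS n, ¬ antiA n i j) ∧
      numWeakComp (antiA n) (antiS n) = n + 1) ∧
    (∀ f : ℕ → ℕ, ∃ n : ℕ,
      DiWGuarded (antiA n) 0 (antiS n) ∧
      f 0 < numWeakComp (antiA n) (antiS n)) := by
  constructor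
  · intro n
    exact ⟨guarded_antiS n, no_arc_antiS n, numWeak_antiS n⟩
  · intro f
    refine ⟨f 0, ⟨∅, Set.finite_empty, by simp, Set.disjoint_empty _, guarded_antiS (f 0)⟩, ?_⟩
    rw [numWeak_antiS]
    omega
end
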